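/- Let λ_i, λ_j > 0, let β > 1 and let B be a positive integer. Let Z_i and Z_j be independent random variables, exponentially distributed with rates λ_i and λ_j respectively, and define the discrete backoff timers D_i = max(B + ⌊log_β Z_i⌋, 0) and D_j = max(B + ⌊log_β Z_j⌋, 0). Then P(D_i ≠ D_j) ≥ ψ(B, β, λ_i, λ_j) + ψ(B, β, λ_j, λ_i), where ψ(B, β, λ_i, λ_j) = λ_i e^{−β^{−B}(λ_i + βλ_j)}/(λ_i + βλ_j) + (e^{λ_i β^{−B}} − 1) e^{−β^{−B}(λ_i + βλ_j)}. -/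

import Mathlib

open MeasureTheory ProbabilityTheory

/-- The function `ψ(B, β, λᵢ, λⱼ)` from Theorem 3 of the paper. -/
noncomputable def psi (B β li lj : ℝ) : ℝ :=
  li * Real.exp (-(β ^ (-B)) * (li + β * lj)) / (li + β * lj)
    + (Real.exp (li * β ^ (-B)) - 1) * Real.exp (-(β ^ (-B)) * (li + β * lj))

namespace FreshCSMAAux

open Real Set

lemma expMeasure_Iic' {r : ℝ} (hr : 0 < r) {a : ℝ} (ha : 0 ≤ a) :
    expMeasure r (Iic a) = ENNReal.ofReal (1 - Real.exp (-(r * a))) := by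
  rw [expMeasure, gammaMeasure, withDensity_apply _ measurableSet_Iic]
  have h : ∫⁻ y in Iic a, gammaPDF 1 r y = ∫⁻ y in Iic a, exponentialPDF r y := rfl
  rw [h, lintegral_exponentialPDF_eq_antiDeriv hr, if_pos ha]

lemma exp_le_one' {r a : ℝ} (hr : 0 < r) (ha : 0 ≤ a) : Real.exp (-(r * a)) ≤ 1 := by
  rw [Real.exp_le_one_iff]
  nlinarith

lemma expMeasure_Ioi' {r : ℝ} (hr : 0 < r) {a : ℝ} (ha : 0 ≤ a) :
    expMeasure r (Ioi a) = ENNReal.ofReal (Real.exp (-(r * a))) := by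
  have hp := isProbabilityMeasure_expMeasure hr
  rw [← compl_Iic, measure_compl measurableSet_Iic (measure_ne_top _ _), measure_univ,
    expMeasure_Iic' hr ha, ← ENNReal.ofReal_one,
    ← ENNReal.ofReal_sub 1 (by linarith [exp_le_one' hr ha])]
  congr 1
  ring

lemma expMeasure_singleton' {r a : ℝ} : expMeasure r {a} = 0 := by
  rw [expMeasure, gammaMeasure]
  exact (withDensity_absolutelyContinuous _ _) (by simp)

lemma expMeasure_Ioo' {r : ℝ} (hr : 0 < r) {a : ℝ} (ha : 0 < a) :
    expMeasure r (Ioo 0 a) = ENNReal.ofReal (1 - Real.exp (-(r * a))) := by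
  have h0 : expMeasure r (Iic 0) = 0 := by
    rw [expMeasure_Iic' hr le_rfl]; simp
  have key : expMeasure r (Iic a) = expMeasure r (Ioo 0 a) := by
    apply le_antisymm
    · calc expMeasure r (Iic a) = expMeasure r (Iic 0 ∪ Ioc 0 a) := by
            rw [Set.Iic_union_Ioc_eq_Iic ha.le]
      _ ≤ expMeasure r (Iic 0) + expMeasure r (Ioc 0 a) := measure_union_le _ _
      _ = expMeasure r (Ioc 0 a) := by rw [h0, zero_add]
      _ = expMeasure r (Ioo 0 a ∪ {a}) := by rw [Set.Ioo_union_right ha]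
      _ ≤ expMeasure r (Ioo 0 a) + expMeasure r {a} := measure_union_le _ _
      _ = expMeasure r (Ioo 0 a) := by rw [expMeasure_singleton', add_zero]
    · exact measure_mono (fun t ht => ht.2.le)
  rw [← key, expMeasure_Iic' hr ha.le]

lemma joint_measure {li lj β x : ℝ} (hli : 0 < li) (hlj : 0 < lj) (hβ : 0 < β) (hx : 0 < x) :
    (expMeasure li).prod (expMeasure lj) {p : ℝ × ℝ | x ≤ p.1 ∧ β * p.1 < p.2}
      = ENNReal.ofReal (li * Real.exp (-x * (li + β * lj)) / (li + β * lj)) := by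
  haveI := isProbabilityMeasure_expMeasure hli
  haveI := isProbabilityMeasure_expMeasure hlj
  set c : ℝ := li + β * lj with hc
  have hcpos : 0 < c := by positivity
  have hS : MeasurableSet {p : ℝ × ℝ | x ≤ p.1 ∧ β * p.1 < p.2} :=
    (measurableSet_le measurable_const measurable_fst).inter
      (measurableSet_lt (measurable_fst.const_mul β) measurable_snd)
  rw [Measure.prod_apply hS]
  have hfun : ∀ s : ℝ, expMeasure lj (Prod.mk s ⁻¹' {p : ℝ × ℝ | x ≤ p.1 ∧ β * p.1 < p.2})
      = Set.indicator (Ici x) (fun s => ENNReal.ofReal (Real.exp (-(lj * (β * s))))) s := by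
    intro s
    by_cases hs : x ≤ s
    · have hpre : Prod.mk s ⁻¹' {p : ℝ × ℝ | x ≤ p.1 ∧ β * p.1 < p.2} = Ioi (β * s) := by
        ext t; simp [hs]
      rw [hpre, expMeasure_Ioi' hlj (by nlinarith : (0:ℝ) ≤ β * s),
        Set.indicator_of_mem (Set.mem_Ici.mpr hs)]
    · have hpre : Prod.mk s ⁻¹' {p : ℝ × ℝ | x ≤ p.1 ∧ β * p.1 < p.2} = ∅ := by
        ext t; simp [hs]
      rw [hpre, measure_empty, Set.indicator_of_notMem (by simpa using hs)]
  simp_rw [hfun]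
  rw [lintegral_indicator measurableSet_Ici _]
  have hf : Measurable (gammaPDF 1 li) := (measurable_gammaPDFReal 1 li).ennreal_ofReal
  have hg : Measurable (fun s : ℝ => ENNReal.ofReal (Real.exp (-(lj * (β * s))))) := by
    apply Measurable.ennreal_ofReal
    exact Real.measurable_exp.comp (((measurable_id.const_mul β).const_mul lj).neg)
  rw [expMeasure, gammaMeasure,
    setLIntegral_withDensity_eq_setLIntegral_mul volume hf hg measurableSet_Ici]
  have hcongr : ∀ s ∈ Ici x,
      (gammaPDF 1 li * fun s => ENNReal.ofReal (Real.exp (-(lj * (β * s))))) s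
        = ENNReal.ofReal (li * Real.exp (-(c * s))) := by
    intro s hs
    have hs0 : (0:ℝ) ≤ s := le_trans hx.le hs
    have h1 : gammaPDF 1 li s = exponentialPDF li s := rfl
    simp only [Pi.mul_apply, h1, exponentialPDF_of_nonneg hs0]
    rw [← ENNReal.ofReal_mul (by positivity)]
    congr 1
    rw [mul_assoc, ← Real.exp_add]
    congr 2
    ring
  rw [setLIntegral_congr_fun measurableSet_Ici hcongr,
    ← setLIntegral_congr Ioi_ae_eq_Ici]
  have hint : IntegrableOn (fun s => li * Real.exp (-(c * s))) (Ioi x) volume := by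
    have h := (exp_neg_integrableOn_Ioi x hcpos).const_mul li
    simpa [neg_mul, IntegrableOn] using h
  rw [← ofReal_integral_eq_lintegral_ofReal hint (ae_of_all _ fun s => by positivity)]
  congr 1
  have hval : ∫ s in Ioi x, Real.exp (-(c * s)) = c⁻¹ * Real.exp (-(c * x)) := by
    have h := integral_comp_mul_left_Ioi (fun u => Real.exp (-u)) x hcpos
    rw [integral_exp_neg_Ioi] at h
    simpa [smul_eq_mul] using h
  rw [MeasureTheory.integral_const_mul, hval]
  rw [show -x * c = -(c * x) by ring]
  field_simp

end FreshCSMAAux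

open FreshCSMAAux Real Set

/-- **Theorem 3 of the paper.** For independent exponential timers `Zᵢ, Zⱼ` with
rates `λᵢ, λⱼ`, the discrete backoff timers `D = max (B + ⌊log_β Z⌋) 0` differ with probability
at least `ψ(B, β, λᵢ, λⱼ) + ψ(B, β, λⱼ, λᵢ)`. -/
theorem prob_different_backoff_timers
    {Ω : Type*} [MeasurableSpace Ω] (μ : Measure Ω) [IsProbabilityMeasure μ]
    (li lj : ℝ) (hli : 0 < li) (hlj : 0 < lj)
    (β : ℝ) (hβ : 1 < β) (B : ℕ) (hB : 0 < B)
    (Zi Zj : Ω → ℝ) (hZi : Measurable Zi) (hZj : Measurable Zj)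
    (hindep : IndepFun Zi Zj μ)
    (hlawi : Measure.map Zi μ = expMeasure li)
    (hlawj : Measure.map Zj μ = expMeasure lj) :
    psi B β li lj + psi B β lj li
      ≤ (μ {ω | max ((B : ℤ) + ⌊Real.logb β (Zi ω)⌋) 0
            ≠ max ((B : ℤ) + ⌊Real.logb β (Zj ω)⌋) 0}).toReal := by
  have hβ0 : (0:ℝ) < β := lt_trans one_pos hβ
  set x : ℝ := β ^ (-(B:ℝ)) with hxdef
  have hx : 0 < x := Real.rpow_pos_of_pos hβ0 _
  have hlogx : Real.logb β x = -(B:ℝ) := Real.logb_rpow hβ0 hβ.ne'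
  have hxβx : x < β * x := by nlinarith
  -- the two "different floor" claims
  have claim1 : ∀ z w : ℝ, x ≤ z → β * z < w →
      max ((B:ℤ) + ⌊Real.logb β z⌋) 0 ≠ max ((B:ℤ) + ⌊Real.logb β w⌋) 0 := by
    intro z w hxz hzw
    have hz0 : 0 < z := lt_of_lt_of_le hx hxz
    have hfz : -(B:ℤ) ≤ ⌊Real.logb β z⌋ := by
      apply Int.le_floor.mpr
      push_cast
      rw [← hlogx]
      exact Real.logb_le_logb_of_le hβ hx hxz
    have hlogmul : Real.logb β (β * z) = 1 + Real.logb β z := by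
      rw [Real.logb_mul hβ0.ne' hz0.ne', Real.logb_self_eq_one hβ]
    have hfw : ⌊Real.logb β z⌋ + 1 ≤ ⌊Real.logb β w⌋ := by
      apply Int.le_floor.mpr
      push_cast
      calc (⌊Real.logb β z⌋ : ℝ) + 1 ≤ Real.logb β z + 1 := by
            linarith [Int.floor_le (Real.logb β z)]
        _ = Real.logb β (β * z) := by rw [hlogmul]; ring
        _ ≤ Real.logb β w := (Real.logb_lt_logb hβ (by positivity) hzw).le
    have h1 : max ((B:ℤ) + ⌊Real.logb β z⌋) 0 = (B:ℤ) + ⌊Real.logb β z⌋ :=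
      max_eq_left (by omega)
    have h2 : (B:ℤ) + ⌊Real.logb β w⌋ ≤ max ((B:ℤ) + ⌊Real.logb β w⌋) 0 :=
      le_max_left _ _
    omega
  have claim2 : ∀ z w : ℝ, 0 < z → z < x → β * x < w →
      max ((B:ℤ) + ⌊Real.logb β z⌋) 0 ≠ max ((B:ℤ) + ⌊Real.logb β w⌋) 0 := by
    intro z w hz0 hzx hxw
    have hfz : ⌊Real.logb β z⌋ ≤ -(B:ℤ) := by
      have h := (Real.logb_lt_logb hβ hz0 hzx).le
      rw [hlogx] at h
      have h2 := Int.floor_le_floor h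
      rwa [show (-(B:ℝ)) = ((-(B:ℤ) : ℤ) : ℝ) by push_cast; ring, Int.floor_intCast] at h2
    have hlogmul : Real.logb β (β * x) = 1 + Real.logb β x := by
      rw [Real.logb_mul hβ0.ne' hx.ne', Real.logb_self_eq_one hβ]
    have hfw : 1 - (B:ℤ) ≤ ⌊Real.logb β w⌋ := by
      apply Int.le_floor.mpr
      push_cast
      calc (1:ℝ) - (B:ℝ) = Real.logb β (β * x) := by rw [hlogmul, hlogx]; ring
        _ ≤ Real.logb β w := (Real.logb_lt_logb hβ (by positivity) hxw).le
    have h1 : max ((B:ℤ) + ⌊Real.logb β z⌋) 0 = 0 := max_eq_right (by omega)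
    have h2 : (B:ℤ) + ⌊Real.logb β w⌋ ≤ max ((B:ℤ) + ⌊Real.logb β w⌋) 0 :=
      le_max_left _ _
    omega
  -- the four events
  set A1 : Set Ω := (fun ω => (Zi ω, Zj ω)) ⁻¹' {p : ℝ × ℝ | x ≤ p.1 ∧ β * p.1 < p.2} with hA1def
  set B1 : Set Ω := (fun ω => (Zj ω, Zi ω)) ⁻¹' {p : ℝ × ℝ | x ≤ p.1 ∧ β * p.1 < p.2} with hB1def
  set A2 : Set Ω := Zi ⁻¹' (Ioo 0 x) ∩ Zj ⁻¹' (Ioi (β * x)) with hA2def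
  set B2 : Set Ω := Zj ⁻¹' (Ioo 0 x) ∩ Zi ⁻¹' (Ioi (β * x)) with hB2def
  have hS : MeasurableSet {p : ℝ × ℝ | x ≤ p.1 ∧ β * p.1 < p.2} :=
    (measurableSet_le measurable_const measurable_fst).inter
      (measurableSet_lt (measurable_fst.const_mul β) measurable_snd)
  have mA1 : MeasurableSet A1 := (hZi.prodMk hZj) hS
  have mB1 : MeasurableSet B1 := (hZj.prodMk hZi) hS
  have mA2 : MeasurableSet A2 :=
    (hZi measurableSet_Ioo).inter (hZj measurableSet_Ioi)
  have mB2 : MeasurableSet B2 :=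
    (hZj measurableSet_Ioo).inter (hZi measurableSet_Ioi)
  -- subset of the target event
  set E : Set Ω := {ω | max ((B : ℤ) + ⌊Real.logb β (Zi ω)⌋) 0
      ≠ max ((B : ℤ) + ⌊Real.logb β (Zj ω)⌋) 0} with hEdef
  have hsub : A1 ∪ A2 ∪ B1 ∪ B2 ⊆ E := by
    rintro ω (((⟨h1, h2⟩ | ⟨h1, h2⟩) | ⟨h1, h2⟩) | ⟨h1, h2⟩)
    · exact claim1 _ _ h1 h2
    · exact claim2 _ _ h1.1 h1.2 h2
    · exact (claim1 _ _ h1 h2).symm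
    · exact (claim2 _ _ h1.1 h1.2 h2).symm
  -- pairwise disjointness
  have dA1A2 : Disjoint A1 A2 := by
    rw [Set.disjoint_left]; rintro ω ⟨h1, _⟩ ⟨h3, _⟩
    exact absurd h1 (not_le.mpr h3.2)
  have dA1B1 : Disjoint A1 B1 := by
    rw [Set.disjoint_left]; rintro ω ⟨h1, h2⟩ ⟨h3, h4⟩
    have hzi : 0 < Zi ω := lt_of_lt_of_le hx h1
    have hzj : 0 < Zj ω := lt_of_lt_of_le hx h3
    nlinarith
  have dA1B2 : Disjoint A1 B2 := by
    rw [Set.disjoint_left]; rintro ω ⟨h1, h2⟩ ⟨h3, _⟩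
    have hb : β * x ≤ β * Zi ω := by nlinarith
    have hj : Zj ω < x := h3.2
    linarith
  have dA2B1 : Disjoint A2 B1 := by
    rw [Set.disjoint_left]; rintro ω ⟨h1, _⟩ ⟨h3, h4⟩
    have hzj : 0 < Zj ω := lt_of_lt_of_le hx h3
    have hb : β * x ≤ β * Zj ω := by nlinarith
    have h12 : Zi ω < x := h1.2
    linarith
  have dA2B2 : Disjoint A2 B2 := by
    rw [Set.disjoint_left]; rintro ω ⟨h1, _⟩ ⟨_, h4⟩
    have h4' : β * x < Zi ω := h4
    have h12 : Zi ω < x := h1.2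
    linarith
  have dB1B2 : Disjoint B1 B2 := by
    rw [Set.disjoint_left]; rintro ω ⟨h1, _⟩ ⟨h3, _⟩
    exact absurd h1 (not_le.mpr h3.2)
  -- laws
  have hprodij : Measure.map (fun ω => (Zi ω, Zj ω)) μ
      = (expMeasure li).prod (expMeasure lj) := by
    rw [(indepFun_iff_map_prod_eq_prod_map_map hZi.aemeasurable hZj.aemeasurable).mp hindep,
      hlawi, hlawj]
  have hprodji : Measure.map (fun ω => (Zj ω, Zi ω)) μ
      = (expMeasure lj).prod (expMeasure li) := by
    rw [(indepFun_iff_map_prod_eq_prod_map_map hZj.aemeasurable hZi.aemeasurable).mp hindep.symm,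
      hlawj, hlawi]
  -- measures of the four events
  set t1 : ℝ := li * Real.exp (-x * (li + β * lj)) / (li + β * lj) with ht1
  set t3 : ℝ := lj * Real.exp (-x * (lj + β * li)) / (lj + β * li) with ht3
  set t2 : ℝ := (1 - Real.exp (-(li * x))) * Real.exp (-(lj * (β * x))) with ht2
  set t4 : ℝ := (1 - Real.exp (-(lj * x))) * Real.exp (-(li * (β * x))) with ht4
  have hμA1 : μ A1 = ENNReal.ofReal t1 := by
    rw [hA1def, ← Measure.map_apply (hZi.prodMk hZj) hS, hprodij,
      joint_measure hli hlj hβ0 hx]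
  have hμB1 : μ B1 = ENNReal.ofReal t3 := by
    rw [hB1def, ← Measure.map_apply (hZj.prodMk hZi) hS, hprodji,
      joint_measure hlj hli hβ0 hx]
  have hμA2 : μ A2 = ENNReal.ofReal t2 := by
    rw [hA2def, hindep.measure_inter_preimage_eq_mul _ _ measurableSet_Ioo measurableSet_Ioi,
      ← Measure.map_apply hZi measurableSet_Ioo, ← Measure.map_apply hZj measurableSet_Ioi,
      hlawi, hlawj, expMeasure_Ioo' hli hx, expMeasure_Ioi' hlj (by positivity),
      ← ENNReal.ofReal_mul (by linarith [exp_le_one' hli hx.le])]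
  have hμB2 : μ B2 = ENNReal.ofReal t4 := by
    rw [hB2def, Set.inter_comm,
      hindep.measure_inter_preimage_eq_mul _ _ measurableSet_Ioi measurableSet_Ioo,
      ← Measure.map_apply hZi measurableSet_Ioi, ← Measure.map_apply hZj measurableSet_Ioo,
      hlawi, hlawj, expMeasure_Ioo' hlj hx, expMeasure_Ioi' hli (by positivity)]
    rw [mul_comm, ← ENNReal.ofReal_mul (by linarith [exp_le_one' hlj hx.le])]
  -- total measure of the union
  have hμU : μ (A1 ∪ A2 ∪ B1 ∪ B2) = ENNReal.ofReal (t1 + t2 + t3 + t4) := by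
    rw [Set.union_assoc, Set.union_assoc,
      measure_union (Set.disjoint_union_right.mpr
        ⟨dA1A2, Set.disjoint_union_right.mpr ⟨dA1B1, dA1B2⟩⟩)
        (mA2.union (mB1.union mB2)),
      measure_union (Set.disjoint_union_right.mpr ⟨dA2B1, dA2B2⟩) (mB1.union mB2),
      measure_union dB1B2 mB2, hμA1, hμA2, hμB1, hμB2]
    have ht1n : 0 ≤ t1 := by rw [ht1]; positivity
    have ht2n : 0 ≤ t2 := by
      rw [ht2]
      have := exp_le_one' hli hx.le
      exact mul_nonneg (by linarith) (Real.exp_pos _).le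
    have ht3n : 0 ≤ t3 := by rw [ht3]; positivity
    have ht4n : 0 ≤ t4 := by
      rw [ht4]
      have := exp_le_one' hlj hx.le
      exact mul_nonneg (by linarith) (Real.exp_pos _).le
    rw [← ENNReal.ofReal_add ht3n ht4n, ← ENNReal.ofReal_add ht2n (by linarith),
      ← ENNReal.ofReal_add ht1n (by linarith)]
    congr 1
    ring
  -- identify psi with the t's
  have hpsi1 : psi (B:ℝ) β li lj = t1 + t2 := by
    rw [psi, ht1, ht2, ← hxdef]
    congr 1
    rw [sub_mul, one_mul, ← Real.exp_add, sub_mul, one_mul, ← Real.exp_add,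
      show li * x + -x * (li + β * lj) = -(lj * (β * x)) by ring,
      show -(li * x) + -(lj * (β * x)) = -x * (li + β * lj) by ring]
  have hpsi2 : psi (B:ℝ) β lj li = t3 + t4 := by
    rw [psi, ht3, ht4, ← hxdef]
    congr 1
    rw [sub_mul, one_mul, ← Real.exp_add, sub_mul, one_mul, ← Real.exp_add,
      show lj * x + -x * (lj + β * li) = -(li * (β * x)) by ring,
      show -(lj * x) + -(li * (β * x)) = -x * (lj + β * li) by ring]
  have ht1n : 0 ≤ t1 := by rw [ht1]; positivity
  have ht2n : 0 ≤ t2 := by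
    rw [ht2]; have := exp_le_one' hli hx.le
    exact mul_nonneg (by linarith) (Real.exp_pos _).le
  have ht3n : 0 ≤ t3 := by rw [ht3]; positivity
  have ht4n : 0 ≤ t4 := by
    rw [ht4]; have := exp_le_one' hlj hx.le
    exact mul_nonneg (by linarith) (Real.exp_pos _).le
  calc psi (B:ℝ) β li lj + psi (B:ℝ) β lj li = t1 + t2 + t3 + t4 := by
        rw [hpsi1, hpsi2]; ring
    _ = (μ (A1 ∪ A2 ∪ B1 ∪ B2)).toReal := by
        rw [hμU, ENNReal.toReal_ofReal (by linarith)]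
    _ ≤ (μ E).toReal :=
        ENNReal.toReal_mono (measure_ne_top μ E) (measure_mono hsub)
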